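/- Let f ∈ L²(σ) be nonnegative and supported on an interval I₀ with σ(I₀) > 0. Define the stopping intervals 𝓕 recursively: 𝓕₀ = {I₀}, and for F ∈ 𝓕, its 𝓕-children are the maximal dyadic subintervals F' of F with E^σ_{F'}|f| > 4 E^σ_F |f|. Then, with γ(F) = E^σ_F |f|, one has ∑_{F∈𝓕} γ(F)² σ(F) ≤ C ‖f‖²_{L²(σ)} for an absolute constant C. -/

import Mathlib

open MeasureTheory Set
open scoped ENNReal NNReal

/-- The average `E^σ_S f = σ(S)⁻¹ ∫_S f dσ`. -/
noncomputable def avgOn (σ : Measure ℝ) (f : ℝ → ℝ) (S : Set ℝ) : ℝ :=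
  ((σ S).toReal)⁻¹ * ∫ x in S, f x ∂σ

lemma young8 (x y : ℝ≥0∞) : 8 * (x * y) ≤ x ^ 2 + 16 * y ^ 2 := by
  rcases eq_or_ne x ⊤ with hx | hx
  · rcases eq_or_ne y 0 with hy | hy
    · simp [hx, hy]
    · have : x ^ 2 = ⊤ := by simp [hx]
      simp [this]
  rcases eq_or_ne y ⊤ with hy | hy
  · rcases eq_or_ne x 0 with hx0 | hx0
    · simp [hy, hx0]
    · have : (16:ℝ≥0∞) * y ^ 2 = ⊤ := by
        simp [hy, ENNReal.mul_eq_top]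
      simp [this]
  lift x to NNReal using hx
  lift y to NNReal using hy
  have h : 8 * (x * y) ≤ x ^ 2 + 16 * y ^ 2 := by
    rw [← NNReal.coe_le_coe]
    push_cast
    nlinarith [sq_nonneg ((x:ℝ) - 4 * y)]
  calc (8:ℝ≥0∞) * (↑x * ↑y) = ((8 * (x * y) : NNReal) : ℝ≥0∞) := by push_cast; ring
  _ ≤ ((x ^ 2 + 16 * y ^ 2 : NNReal) : ℝ≥0∞) := ENNReal.coe_le_coe.mpr h
  _ = (x:ℝ≥0∞) ^ 2 + 16 * (y:ℝ≥0∞) ^ 2 := by push_cast; ring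

/-- Quasi-orthogonality of the stopping data: for `f ≥ 0` supported on `I₀` and the
stopping tree `𝓕` built by the selection rule `E^σ_{F'}|f| > 4 E^σ_F |f|`,
one has `∑_{F∈𝓕} (E^σ_F f)² σ(F) ≤ C ‖f‖²_{L²(σ)}`. The tree is encoded by a countable
index set with a root, a parent map, a generation function, and disjoint siblings. -/
theorem stmt8 : ∃ C : ℝ, 0 < C ∧
    ∀ (σ : Measure ℝ) (ι : Type) (_ : Countable ι) (root : ι) (par : ι → ι) (gen : ι → ℕ)
      (Fi : ι → Set ℝ) (f : ℝ → ℝ) (a b : ℝ),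
      a < b → Fi root = Icc a b → σ (Icc a b) ≠ 0 → σ (Icc a b) ≠ ⊤ →
      (∀ i, MeasurableSet (Fi i)) →
      (∀ i, i ≠ root → Fi i ⊆ Fi (par i)) →
      gen root = 0 →
      (∀ i, i ≠ root → gen i = gen (par i) + 1) →
      (∀ i j, i ≠ j → par i = par j → Disjoint (Fi i) (Fi j)) →
      (∀ i, i ≠ root → 4 * avgOn σ f (Fi (par i)) < avgOn σ f (Fi i)) →
      (∀ x, 0 ≤ f x) → (∀ x, x ∉ Icc a b → f x = 0) → MemLp f 2 σ →
      ∑' i, (avgOn σ f (Fi i)) ^ 2 * (σ (Fi i)).toReal ≤ C * ∫ x, (f x) ^ 2 ∂σ := by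
  refine ⟨4, by norm_num, ?_⟩
  intro σ ι hcnt root par gen Fi f a b hab hroot hσ0 hσtop hmeas hsub hgen0 hgens hsib hsel
    hf0 hsupp hf2
  haveI := hcnt
  have hint_sq : Integrable (fun x => f x ^ 2) σ := hf2.integrable_sq
  have hRHS0 : 0 ≤ ∫ x, f x ^ 2 ∂σ := integral_nonneg fun x => sq_nonneg _
  set γ : ι → ℝ := fun i => avgOn σ f (Fi i) with hγdef
  by_cases hSum : Summable (fun i => γ i ^ 2 * (σ (Fi i)).toReal)
  swap
  · rw [tsum_eq_zero_of_not_summable hSum]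
    positivity
  -- tree lemmas
  have hgenroot : ∀ i, gen i = 0 → i = root := by
    intro i h
    by_contra hi
    have := hgens i hi; omega
  have hanc : ∀ m i, m ≤ gen i → gen (par^[m] i) = gen i - m ∧ Fi i ⊆ Fi (par^[m] i) := by
    intro m
    induction m with
    | zero => intro i _; simp
    | succ m ih =>
      intro i hm
      have hi : i ≠ root := by
        intro h; rw [h, hgen0] at hm; omega
      have hgi := hgens i hi
      obtain ⟨h2, h3⟩ := ih (par i) (by omega)
      rw [Function.iterate_succ_apply]
      exact ⟨by rw [h2]; omega, (hsub i hi).trans h3⟩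
  have hFiIcc : ∀ i, Fi i ⊆ Icc a b := by
    intro i
    obtain ⟨h1, h2⟩ := hanc (gen i) i le_rfl
    have : par^[gen i] i = root := hgenroot _ (by omega)
    rw [← hroot, ← this]; exact h2
  have hgendisj : ∀ n i j, gen i = n → gen j = n → i ≠ j → Disjoint (Fi i) (Fi j) := by
    intro n
    induction n with
    | zero => intro i j hi hj hij; exact absurd ((hgenroot i hi).trans (hgenroot j hj).symm) hij
    | succ n ih =>
      intro i j hi hj hij
      have hi' : i ≠ root := by intro h; rw [h, hgen0] at hi; omega
      have hj' : j ≠ root := by intro h; rw [h, hgen0] at hj; omega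
      by_cases hp : par i = par j
      · exact hsib i j hij hp
      · exact Disjoint.mono (hsub i hi') (hsub j hj')
          (ih (par i) (par j) (by have := hgens i hi'; omega) (by have := hgens j hj'; omega) hp)
  set U : ι → Set ℝ := fun i => ⋃ j : {j : ι // par j = i ∧ j ≠ root}, Fi j.1 with hUdef
  set E : ι → Set ℝ := fun i => Fi i \ U i with hEdef
  have hUmeas : ∀ i, MeasurableSet (U i) := fun i => MeasurableSet.iUnion fun j => hmeas _
  have hEmeas : ∀ i, MeasurableSet (E i) := fun i => (hmeas i).diff (hUmeas i)
  have hUsub : ∀ i, U i ⊆ Fi i := by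
    intro i
    refine iUnion_subset fun j => ?_
    have := hsub j.1 j.2.2
    rwa [j.2.1] at this
  have hEdisjaux : ∀ i j, gen i < gen j → Disjoint (E i) (Fi j) := by
    intro i j hlt
    set m := gen j - gen i - 1 with hm
    obtain ⟨hgc, hsc⟩ := hanc m j (by omega)
    obtain ⟨hgk, hsk⟩ := hanc (m + 1) j (by omega)
    rw [Function.iterate_succ_apply'] at hgk hsk
    set c := par^[m] j with hc
    have hgc' : gen c = gen i + 1 := by omega
    have hcroot : c ≠ root := by intro h; rw [h, hgen0] at hgc'; omega
    by_cases hk : par c = i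
    · have hjU : Fi j ⊆ U i := by
        refine hsc.trans ?_
        exact subset_iUnion (fun j : {j : ι // par j = i ∧ j ≠ root} => Fi j.1) ⟨c, hk, hcroot⟩
      exact Disjoint.mono_right hjU Set.disjoint_sdiff_left
    · have hd : Disjoint (Fi i) (Fi (par c)) :=
        hgendisj (gen i) i (par c) rfl (by omega) (Ne.symm hk)
      exact hd.mono diff_subset hsk
  have hEdisj : ∀ i j, i ≠ j → Disjoint (E i) (E j) := by
    intro i j hij
    rcases lt_trichotomy (gen i) (gen j) with h | h | h
    · exact (hEdisjaux i j h).mono_right diff_subset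
    · exact (hgendisj (gen i) i j rfl h.symm hij).mono diff_subset diff_subset
    · exact ((hEdisjaux j i h).mono_right diff_subset).symm
  -- integrability and basic facts
  have hfin : ∀ i, σ (Fi i) ≠ ⊤ := fun i => ne_top_of_le_ne_top hσtop (measure_mono (hFiIcc i))
  haveI : IsFiniteMeasure (σ.restrict (Icc a b)) :=
    ⟨by rwa [Measure.restrict_apply_univ, lt_top_iff_ne_top]⟩
  have hIntIcc : IntegrableOn f (Icc a b) σ := (hf2.restrict _).integrable one_le_two
  have hIntOn : ∀ i, IntegrableOn f (Fi i) σ := fun i => hIntIcc.mono_set (hFiIcc i)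
  have hγ0 : ∀ i, 0 ≤ γ i := fun i =>
    mul_nonneg (inv_nonneg.mpr ENNReal.toReal_nonneg)
      (setIntegral_nonneg (hmeas i) fun x _ => hf0 x)
  have hAvgR : ∀ i, γ i * (σ (Fi i)).toReal = ∫ x in Fi i, f x ∂σ := by
    intro i
    rcases eq_or_ne (σ (Fi i)) 0 with h | h
    · rw [Measure.restrict_eq_zero.mpr h]
      simp [hγdef, avgOn, h]
    · have hne : (σ (Fi i)).toReal ≠ 0 := ENNReal.toReal_ne_zero.mpr ⟨h, hfin i⟩
      simp only [hγdef, avgOn]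
      field_simp
  set fE : ℝ → ℝ≥0∞ := fun x => ENNReal.ofReal (f x) with hfEdef
  set g : ι → ℝ≥0∞ := fun i => ENNReal.ofReal (γ i) with hgdef
  set FL : ι → ℝ≥0∞ := fun i => ∫⁻ x in Fi i, fE x ∂σ with hFLdef
  have hAvgE : ∀ i, g i * σ (Fi i) = FL i := by
    intro i
    have h1 : ENNReal.ofReal (γ i * (σ (Fi i)).toReal)
        = ENNReal.ofReal (∫ x in Fi i, f x ∂σ) := by rw [hAvgR i]
    rwa [ENNReal.ofReal_mul (hγ0 i), ENNReal.ofReal_toReal (hfin i),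
      ofReal_integral_eq_lintegral_ofReal (hIntOn i) (ae_of_all _ hf0)] at h1
  have hdecomp : ∀ i, FL i
      = (∫⁻ x in E i, fE x ∂σ) + ∑' j : {j : ι // par j = i ∧ j ≠ root}, FL j.1 := by
    intro i
    have hsplit : Fi i = E i ∪ U i := by
      rw [hEdef]; exact (diff_union_of_subset (hUsub i)).symm
    have h2 : (∫⁻ x in U i, fE x ∂σ) = ∑' j : {j : ι // par j = i ∧ j ≠ root}, FL j.1 := by
      rw [hUdef]
      exact lintegral_iUnion (fun j => hmeas _) (fun j k hjk =>
        hsib j.1 k.1 (fun h => hjk (Subtype.ext h)) (j.2.1.trans k.2.1.symm)) _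
    rw [← h2]
    show (∫⁻ x in Fi i, fE x ∂σ) = _
    conv_lhs => rw [hsplit]
    exact lintegral_union (hUmeas i) Set.disjoint_sdiff_left
  have hg4 : ∀ j, j ≠ root → 4 * g (par j) ≤ g j := by
    intro j hj
    have h := (hsel j hj).le
    calc (4:ℝ≥0∞) * g (par j) = ENNReal.ofReal (4 * γ (par j)) := by
          rw [ENNReal.ofReal_mul (by norm_num), ENNReal.ofReal_ofNat]
    _ ≤ ENNReal.ofReal (γ j) := ENNReal.ofReal_le_ofReal h
  set SE : ℝ≥0∞ := ∑' i, g i ^ 2 * σ (Fi i) with hSEdef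
  set L : ℝ≥0∞ := ∫⁻ x, fE x ^ 2 ∂σ with hLdef
  have hL : L = ENNReal.ofReal (∫ x, f x ^ 2 ∂σ) := by
    rw [ofReal_integral_eq_lintegral_ofReal hint_sq (ae_of_all _ fun x => sq_nonneg _)]
    simp only [hLdef, hfEdef]
    congr 1
    funext x
    rw [ENNReal.ofReal_pow (hf0 x)]
  have hSE_eq : SE = ENNReal.ofReal (∑' i, γ i ^ 2 * (σ (Fi i)).toReal) := by
    rw [ENNReal.ofReal_tsum_of_nonneg
      (fun i => mul_nonneg (sq_nonneg _) ENNReal.toReal_nonneg) hSum]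
    refine tsum_congr fun i => ?_
    rw [ENNReal.ofReal_mul (sq_nonneg _), ENNReal.ofReal_pow (hγ0 i),
      ENNReal.ofReal_toReal (hfin i)]
  have h8top : (8:ℝ≥0∞) ≠ ⊤ := by norm_num
  have h16top : (16:ℝ≥0∞) ≠ ⊤ := by norm_num
  -- the key inequality
  set A : ℝ≥0∞ := ∑' i, g i * ∫⁻ x in E i, fE x ∂σ with hAdef
  set B : ℝ≥0∞ := ∑' i, ∑' j : {j : ι // par j = i ∧ j ≠ root}, g i * FL j.1 with hBdef
  have hSEAB : SE = A + B := by
    rw [hSEdef, hAdef, hBdef, ← ENNReal.tsum_add]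
    refine tsum_congr fun i => ?_
    rw [sq, mul_assoc, hAvgE i, hdecomp i, mul_add, ENNReal.tsum_mul_left]
  have hA : 8 * A ≤ SE + 16 * L := by
    have hper : ∀ i, 8 * (g i * ∫⁻ x in E i, fE x ∂σ)
        ≤ g i ^ 2 * σ (E i) + 16 * ∫⁻ x in E i, fE x ^ 2 ∂σ := by
      intro i
      calc 8 * (g i * ∫⁻ x in E i, fE x ∂σ) = ∫⁻ x in E i, 8 * (g i * fE x) ∂σ := by
            rw [lintegral_const_mul' 8 _ h8top,
              lintegral_const_mul' (g i) _ ENNReal.ofReal_ne_top]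
      _ ≤ ∫⁻ x in E i, (g i ^ 2 + 16 * fE x ^ 2) ∂σ :=
            lintegral_mono fun x => young8 (g i) (fE x)
      _ = g i ^ 2 * σ (E i) + 16 * ∫⁻ x in E i, fE x ^ 2 ∂σ := by
            rw [lintegral_add_left measurable_const, setLIntegral_const,
              lintegral_const_mul' 16 _ h16top]
    calc 8 * A = ∑' i, 8 * (g i * ∫⁻ x in E i, fE x ∂σ) := by
          rw [hAdef, ← ENNReal.tsum_mul_left]
    _ ≤ ∑' i, (g i ^ 2 * σ (E i) + 16 * ∫⁻ x in E i, fE x ^ 2 ∂σ) :=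
          ENNReal.tsum_le_tsum hper
    _ = (∑' i, g i ^ 2 * σ (E i)) + 16 * ∑' i, ∫⁻ x in E i, fE x ^ 2 ∂σ := by
          rw [ENNReal.tsum_add, ENNReal.tsum_mul_left]
    _ ≤ SE + 16 * L := by
          refine add_le_add (ENNReal.tsum_le_tsum fun i =>
            mul_le_mul_right (measure_mono diff_subset) _) (mul_le_mul_right ?_ _)
          have hEU : ∑' i, ∫⁻ x in E i, fE x ^ 2 ∂σ = ∫⁻ x in ⋃ i, E i, fE x ^ 2 ∂σ :=
            (lintegral_iUnion hEmeas (fun i j hij => hEdisj i j hij) _).symm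
          rw [hEU, hLdef]
          exact lintegral_mono' Measure.restrict_le_self le_rfl
  have hB : 8 * B ≤ 2 * SE := by
    have hper : ∀ i (j : {j : ι // par j = i ∧ j ≠ root}),
        8 * (g i * FL j.1) ≤ 2 * (g j.1 ^ 2 * σ (Fi j.1)) := by
      intro i j
      have h4 := hg4 j.1 j.2.2
      rw [j.2.1] at h4
      calc 8 * (g i * FL j.1) = 2 * ((4 * g i) * FL j.1) := by ring
      _ ≤ 2 * (g j.1 * FL j.1) := mul_le_mul_right (mul_le_mul_left h4 _) 2
      _ = 2 * (g j.1 ^ 2 * σ (Fi j.1)) := by rw [← hAvgE j.1]; ring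
    let e : (Σ i : ι, {j : ι // par j = i ∧ j ≠ root}) ≃ {j : ι // j ≠ root} :=
      { toFun := fun p => ⟨p.2.1, p.2.2.2⟩
        invFun := fun j => ⟨par j.1, j.1, rfl, j.2⟩
        left_inv := fun p => by
          obtain ⟨i, j, hj, hr⟩ := p
          subst hj
          rfl
        right_inv := fun j => rfl }
    calc 8 * B = ∑' i, ∑' j : {j : ι // par j = i ∧ j ≠ root}, 8 * (g i * FL j.1) := by
          rw [hBdef, ← ENNReal.tsum_mul_left]
          exact tsum_congr fun i => ENNReal.tsum_mul_left.symm
    _ ≤ ∑' i, ∑' j : {j : ι // par j = i ∧ j ≠ root}, 2 * (g j.1 ^ 2 * σ (Fi j.1)) :=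
          ENNReal.tsum_le_tsum fun i => ENNReal.tsum_le_tsum (hper i)
    _ = ∑' p : Σ i : ι, {j : ι // par j = i ∧ j ≠ root}, 2 * (g p.2.1 ^ 2 * σ (Fi p.2.1)) :=
          (ENNReal.tsum_sigma' (fun p : Σ i : ι, {j : ι // par j = i ∧ j ≠ root} =>
            2 * (g p.2.1 ^ 2 * σ (Fi p.2.1)))).symm
    _ = ∑' j : {j : ι // j ≠ root}, 2 * (g j.1 ^ 2 * σ (Fi j.1)) :=
          e.tsum_eq fun j : {j : ι // j ≠ root} => 2 * (g j.1 ^ 2 * σ (Fi j.1))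
    _ ≤ ∑' j : ι, 2 * (g j ^ 2 * σ (Fi j)) :=
          ENNReal.summable.tsum_le_tsum_of_inj Subtype.val Subtype.val_injective (fun _ _ => zero_le)
            (fun _ => le_rfl) ENNReal.summable
    _ = 2 * SE := ENNReal.tsum_mul_left
  have key : 8 * SE ≤ 3 * SE + 16 * L := by
    calc 8 * SE = 8 * A + 8 * B := by rw [hSEAB]; ring
    _ ≤ (SE + 16 * L) + 2 * SE := add_le_add hA hB
    _ = 3 * SE + 16 * L := by ring
  have hSEne : SE ≠ ⊤ := by rw [hSE_eq]; exact ENNReal.ofReal_ne_top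
  have hLne : L ≠ ⊤ := by rw [hL]; exact ENNReal.ofReal_ne_top
  have hRHSne : 3 * SE + 16 * L ≠ ⊤ :=
    ENNReal.add_ne_top.mpr ⟨ENNReal.mul_ne_top (by norm_num) hSEne,
      ENNReal.mul_ne_top h16top hLne⟩
  have hreal : 8 * SE.toReal ≤ 3 * SE.toReal + 16 * L.toReal := by
    have h := ENNReal.toReal_mono hRHSne key
    rw [ENNReal.toReal_mul,
      ENNReal.toReal_add (ENNReal.mul_ne_top (by norm_num) hSEne)
        (ENNReal.mul_ne_top h16top hLne),
      ENNReal.toReal_mul, ENNReal.toReal_mul] at h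
    simpa using h
  have hS_toReal : SE.toReal = ∑' i, γ i ^ 2 * (σ (Fi i)).toReal := by
    rw [hSE_eq, ENNReal.toReal_ofReal
      (tsum_nonneg fun i => mul_nonneg (sq_nonneg _) ENNReal.toReal_nonneg)]
  have hL_toReal : L.toReal = ∫ x, f x ^ 2 ∂σ := by
    rw [hL, ENNReal.toReal_ofReal hRHS0]
  rw [← hS_toReal, ← hL_toReal]
  linarith
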